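/- For every α ∈ (0,1] and η ∈ (0,α) there is a constant C < ∞, depending only on α and η, with the following property. Let (X,μ) be a probability space, let s : X → S and t : X → T be measurable maps into finite sets, and set I := I_μ(s;t). Then for every measurable U ⊆ X with μ(U) ≥ α there is a finite subset S₀ ⊆ U such that log |S₀| ≤ C·(I + 1) and μ( U ∩ { x : ∃ w ∈ U, t(x) = t(w) and ∃ z ∈ S₀, s(w) = s(z) } ) > μ(U) − η. -/

import Mathlib

open MeasureTheory

/-- Shannon entropy of a finite-valued map, with natural logarithm. -/
noncomputable def finEntropy {X S : Type*} [MeasurableSpace X] [Fintype S]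
    (μ : Measure X) (s : X → S) : ℝ :=
  ∑ i : S, Real.negMulLog ((μ (s ⁻¹' {i})).toReal)

/-- Mutual information `I_μ(s;t)` of finite-valued maps. -/
noncomputable def finMutualInfo {X S T : Type*} [MeasurableSpace X]
    [Fintype S] [Fintype T] (μ : Measure X) (s : X → S) (t : X → T) : ℝ :=
  finEntropy μ s + finEntropy μ t - finEntropy μ (fun x => (s x, t x))

section Aux
open Finset


lemma log_sum_ineq {ι : Type*} (A : Finset ι) (w y : ι → ℝ)
    (hw : ∀ i ∈ A, 0 ≤ w i) (hy : ∀ i ∈ A, 0 ≤ y i)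
    (hwy : ∀ i ∈ A, y i = 0 → w i = 0) :
    (∑ i ∈ A, w i) * Real.log ((∑ i ∈ A, w i) / (∑ i ∈ A, y i)) ≤
      ∑ i ∈ A, w i * Real.log (w i / y i) := by
  rcases eq_or_lt_of_le (Finset.sum_nonneg hw) with h0 | hWpos
  · have hz : ∀ i ∈ A, w i = 0 := (Finset.sum_eq_zero_iff_of_nonneg hw).1 h0.symm
    have h1 : ∑ i ∈ A, w i * Real.log (w i / y i) = 0 :=
      Finset.sum_eq_zero (fun i hi => by rw [hz i hi, zero_mul])
    rw [← h0, h1]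
    simp
  · set Ap := A.filter (fun i => 0 < w i) with hAp
    have hApsub : Ap ⊆ A := Finset.filter_subset _ _
    have hwz : ∀ i ∈ A, i ∉ Ap → w i = 0 := by
      intro i hi hni
      rcases eq_or_lt_of_le (hw i hi) with h | h
      · exact h.symm
      · exact absurd (Finset.mem_filter.2 ⟨hi, h⟩) hni
    have hwpos : ∀ i ∈ Ap, 0 < w i := fun i hi => (Finset.mem_filter.1 hi).2
    have hypos : ∀ i ∈ Ap, 0 < y i := by
      intro i hi
      rcases eq_or_lt_of_le (hy i (hApsub hi)) with h | h
      · exact absurd (hwy i (hApsub hi) h.symm) (ne_of_gt (hwpos i hi))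
      · exact h
    have hWp : ∑ i ∈ A, w i = ∑ i ∈ Ap, w i :=
      (Finset.sum_subset hApsub (fun i hi hni => hwz i hi hni)).symm
    have hRHS : ∑ i ∈ A, w i * Real.log (w i / y i)
        = ∑ i ∈ Ap, w i * Real.log (w i / y i) :=
      (Finset.sum_subset hApsub (fun i hi hni => by rw [hwz i hi hni, zero_mul])).symm
    set W := ∑ i ∈ A, w i with hW
    set Yp := ∑ i ∈ Ap, y i with hYp
    have hApne : Ap.Nonempty := by
      by_contra hne
      rw [Finset.not_nonempty_iff_eq_empty] at hne
      rw [hWp, hne, Finset.sum_empty] at hWpos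
      exact lt_irrefl 0 hWpos
    have hYppos : 0 < Yp := Finset.sum_pos hypos hApne
    have hYle : Yp ≤ ∑ i ∈ A, y i := Finset.sum_le_sum_of_subset_of_nonneg hApsub
      (fun i hi _ => hy i hi)
    -- key pointwise bound on Ap
    have key : ∀ i ∈ Ap, w i * Real.log (W / Yp) - w i * Real.log (w i / y i)
        ≤ y i * (W / Yp) - w i := by
      intro i hi
      have hwi := hwpos i hi
      have hyi := hypos i hi
      have harg : 0 < y i * W / (w i * Yp) := by positivity
      have h1 := Real.log_le_sub_one_of_pos harg
      have hlog : Real.log (y i * W / (w i * Yp))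
          = Real.log (W / Yp) - Real.log (w i / y i) := by
        rw [Real.log_div (by positivity) (by positivity),
          Real.log_div (ne_of_gt hWpos) (ne_of_gt hYppos),
          Real.log_div (ne_of_gt hwi) (ne_of_gt hyi),
          Real.log_mul (ne_of_gt hyi) (ne_of_gt hWpos),
          Real.log_mul (ne_of_gt hwi) (ne_of_gt hYppos)]
        ring
      have h2 : w i * Real.log (y i * W / (w i * Yp)) ≤ y i * (W / Yp) - w i := by
        have := mul_le_mul_of_nonneg_left h1 (le_of_lt hwi)
        calc w i * Real.log (y i * W / (w i * Yp)) ≤ w i * (y i * W / (w i * Yp) - 1) := this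
          _ = y i * (W / Yp) - w i := by field_simp
      calc w i * Real.log (W / Yp) - w i * Real.log (w i / y i)
          = w i * Real.log (y i * W / (w i * Yp)) := by rw [hlog]; ring
        _ ≤ y i * (W / Yp) - w i := h2
    have hsum := Finset.sum_le_sum key
    rw [Finset.sum_sub_distrib] at hsum
    have e1 : ∑ i ∈ Ap, w i * Real.log (W / Yp) = W * Real.log (W / Yp) := by
      rw [← Finset.sum_mul, ← hWp]
    have e2 : ∑ i ∈ Ap, (y i * (W / Yp) - w i) = Yp * (W / Yp) - W := by
      rw [Finset.sum_sub_distrib, ← Finset.sum_mul, ← hYp, ← hWp]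
    rw [e1, e2] at hsum
    have e3 : Yp * (W / Yp) - W = 0 := by field_simp; ring
    rw [e3] at hsum
    have hmain : W * Real.log (W / Yp) ≤ ∑ i ∈ Ap, w i * Real.log (w i / y i) := by
      linarith
    rw [hRHS]
    refine le_trans ?_ hmain
    apply mul_le_mul_of_nonneg_left ?_ (le_of_lt hWpos)
    have hYpos : 0 < ∑ i ∈ A, y i := lt_of_lt_of_le hYppos hYle
    apply Real.log_le_log (by positivity)
    exact div_le_div_of_nonneg_left (le_of_lt hWpos) hYppos hYle


-- splitting bound: H(x)+H(y) ≤ H(x+y) + (x+y) log 2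
lemma negMulLog_add_le (x y : ℝ) (hx : 0 ≤ x) (hy : 0 ≤ y) :
    Real.negMulLog x + Real.negMulLog y
      ≤ Real.negMulLog (x + y) + (x + y) * Real.log 2 := by
  rcases eq_or_lt_of_le hx with h | hxp
  · rw [← h]; simp
    nlinarith [Real.log_nonneg (by norm_num : (1:ℝ) ≤ 2), hy]
  rcases eq_or_lt_of_le hy with h | hyp
  · rw [← h]; simp
    nlinarith [Real.log_nonneg (by norm_num : (1:ℝ) ≤ 2), hx]
  have hs : 0 < x + y := by linarith
  have k1 : Real.log (x + y) - Real.log (2*x) ≤ (x+y)/(2*x) - 1 := by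
    have := Real.log_le_sub_one_of_pos (show 0 < (x+y)/(2*x) by positivity)
    rwa [Real.log_div (ne_of_gt hs) (by positivity)] at this
  have k2 : Real.log (x + y) - Real.log (2*y) ≤ (x+y)/(2*y) - 1 := by
    have := Real.log_le_sub_one_of_pos (show 0 < (x+y)/(2*y) by positivity)
    rwa [Real.log_div (ne_of_gt hs) (by positivity)] at this
  have k1' := mul_le_mul_of_nonneg_left k1 hx
  have k2' := mul_le_mul_of_nonneg_left k2 hy
  have e1 : x * ((x+y)/(2*x) - 1) = (x+y)/2 - x := by field_simp
  have e2 : y * ((x+y)/(2*y) - 1) = (x+y)/2 - y := by field_simp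
  rw [e1] at k1'; rw [e2] at k2'
  have l1 : Real.log (2*x) = Real.log 2 + Real.log x := Real.log_mul (by norm_num) (ne_of_gt hxp)
  have l2 : Real.log (2*y) = Real.log 2 + Real.log y := Real.log_mul (by norm_num) (ne_of_gt hyp)
  simp only [Real.negMulLog]
  nlinarith [k1', k2']

-- superadditivity: H(x+y) ≤ H(x) + H(y)
lemma negMulLog_superadd (x y : ℝ) (hx : 0 ≤ x) (hy : 0 ≤ y) :
    Real.negMulLog (x + y) ≤ Real.negMulLog x + Real.negMulLog y := by
  rcases eq_or_lt_of_le hx with h | hxp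
  · rw [← h]; simp
  rcases eq_or_lt_of_le hy with h | hyp
  · rw [← h]; simp
  have hs : 0 < x + y := by linarith
  have h1 : Real.log x ≤ Real.log (x+y) := Real.log_le_log hxp (by linarith)
  have h2 : Real.log y ≤ Real.log (x+y) := Real.log_le_log hyp (by linarith)
  simp only [Real.negMulLog]
  nlinarith

-- "mutual information type" quantity nonneg for subprobability matrices
lemma subinfo_nonneg {S T : Type*} [Fintype S] [Fintype T]
    (ρ : S → T → ℝ) (h0 : ∀ a b, 0 ≤ ρ a b) (h1 : ∑ a : S, ∑ b : T, ρ a b ≤ 1) :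
    0 ≤ (∑ a : S, Real.negMulLog (∑ b : T, ρ a b))
        + (∑ b : T, Real.negMulLog (∑ a : S, ρ a b))
        - ∑ a : S, ∑ b : T, Real.negMulLog (ρ a b) := by
  classical
  set ρs : S → ℝ := fun a => ∑ b : T, ρ a b with hρs
  set ρt : T → ℝ := fun b => ∑ a : S, ρ a b with hρt
  have hρs0 : ∀ a, 0 ≤ ρs a := fun a => Finset.sum_nonneg (fun b _ => h0 a b)
  have hρt0 : ∀ b, 0 ≤ ρt b := fun b => Finset.sum_nonneg (fun a _ => h0 a b)
  set R := ∑ a : S, ∑ b : T, ρ a b with hR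
  have hR0 : 0 ≤ R := Finset.sum_nonneg (fun a _ => hρs0 a)
  -- apply log-sum over pairs
  have hls := log_sum_ineq (Finset.univ : Finset (S × T))
    (fun i => ρ i.1 i.2) (fun i => ρs i.1 * ρt i.2)
    (fun i _ => h0 i.1 i.2)
    (fun i _ => mul_nonneg (hρs0 i.1) (hρt0 i.2))
    (by
      intro i _ hzero
      rcases mul_eq_zero.1 hzero with h | h
      · have : ρ i.1 i.2 ≤ 0 := by
          rw [← h]; exact Finset.single_le_sum (fun b _ => h0 i.1 b) (Finset.mem_univ i.2)
        linarith [h0 i.1 i.2]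
      · have : ρ i.1 i.2 ≤ 0 := by
          rw [← h]; exact Finset.single_le_sum (fun a _ => h0 a i.2) (Finset.mem_univ i.1)
        linarith [h0 i.1 i.2])
  have hsw : ∑ i : S × T, ρ i.1 i.2 = R := by rw [hR, Fintype.sum_prod_type]
  have hsy : ∑ i : S × T, ρs i.1 * ρt i.2 = R * R := by
    rw [Fintype.sum_prod_type]
    rw [show ∑ a : S, ∑ b : T, ρs a * ρt b = (∑ a : S, ρs a) * (∑ b : T, ρt b) by
      rw [Finset.sum_mul_sum]]
    have l1 : ∑ a : S, ρs a = R := rfl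
    have l2 : ∑ b : T, ρt b = R := by rw [hR, Finset.sum_comm]
    rw [l1, l2]
  rw [hsw, hsy] at hls
  -- identify RHS with entropy expression
  have hident : ∑ i : S × T, ρ i.1 i.2 * Real.log (ρ i.1 i.2 / (ρs i.1 * ρt i.2))
      = (∑ a : S, Real.negMulLog (ρs a)) + (∑ b : T, Real.negMulLog (ρt b))
        - ∑ a : S, ∑ b : T, Real.negMulLog (ρ a b) := by
    rw [Fintype.sum_prod_type]
    have hpt : ∀ a b, ρ a b * Real.log (ρ a b / (ρs a * ρt b))
        = -Real.negMulLog (ρ a b) - ρ a b * Real.log (ρs a) - ρ a b * Real.log (ρt b) := by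
      intro a b
      rcases eq_or_lt_of_le (h0 a b) with h | h
      · rw [← h]; simp [Real.negMulLog]
      · have hsa : 0 < ρs a := lt_of_lt_of_le h
          (Finset.single_le_sum (fun b' _ => h0 a b') (Finset.mem_univ b))
        have hta : 0 < ρt b := lt_of_lt_of_le h
          (Finset.single_le_sum (fun a' _ => h0 a' b) (Finset.mem_univ a))
        rw [Real.log_div (ne_of_gt h) (by positivity),
          Real.log_mul (ne_of_gt hsa) (ne_of_gt hta)]
        simp [Real.negMulLog]
        ring
    rw [Finset.sum_congr rfl (fun a _ => Finset.sum_congr rfl (fun b _ => hpt a b))]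
    have e1 : ∀ a : S, ∑ b : T, (-Real.negMulLog (ρ a b) - ρ a b * Real.log (ρs a)
        - ρ a b * Real.log (ρt b))
        = (∑ b : T, -Real.negMulLog (ρ a b)) - ρs a * Real.log (ρs a)
          - ∑ b : T, ρ a b * Real.log (ρt b) := by
      intro a
      rw [Finset.sum_sub_distrib, Finset.sum_sub_distrib, ← Finset.sum_mul]
    rw [Finset.sum_congr rfl (fun a _ => e1 a), Finset.sum_sub_distrib,
      Finset.sum_sub_distrib]
    have e2 : ∑ a : S, ∑ b : T, ρ a b * Real.log (ρt b)
        = ∑ b : T, ρt b * Real.log (ρt b) := by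
      rw [Finset.sum_comm]
      exact Finset.sum_congr rfl (fun b _ => by rw [← Finset.sum_mul])
    rw [e2]
    simp only [Real.negMulLog, neg_mul, Finset.sum_neg_distrib, sub_neg_eq_add, neg_neg]
    ring
  rw [hident] at hls
  refine le_trans ?_ hls
  rcases eq_or_lt_of_le hR0 with h | h
  · rw [← h]; simp
  · have : R / (R * R) = 1 / R := by field_simp
    rw [this]
    have : Real.log (1 / R) = - Real.log R := by
      rw [one_div, Real.log_inv]
    rw [this]
    have : Real.log R ≤ 0 := Real.log_nonpos hR0 h1
    nlinarith

lemma markov_quantity_le {S T : Type*} [Fintype S] [Fintype T]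
    (π : S → T → ℝ) (h0 : ∀ a b, 0 ≤ π a b) :
    ∑ b : T, (∑ a : S, π a b) *
        (-Real.log (∑ a : S, (if 0 < π a b then (∑ b' : T, π a b') else 0)))
      ≤ (∑ a : S, Real.negMulLog (∑ b : T, π a b))
        + (∑ b : T, Real.negMulLog (∑ a : S, π a b))
        - ∑ a : S, ∑ b : T, Real.negMulLog (π a b) := by
  classical
  set πs : S → ℝ := fun a => ∑ b : T, π a b with hπs
  set πt : T → ℝ := fun b => ∑ a : S, π a b with hπt
  set P : T → ℝ := fun b => ∑ a : S, (if 0 < π a b then πs a else 0) with hP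
  have hπs0 : ∀ a, 0 ≤ πs a := fun a => Finset.sum_nonneg (fun b _ => h0 a b)
  have hπt0 : ∀ b, 0 ≤ πt b := fun b => Finset.sum_nonneg (fun a _ => h0 a b)
  have hyb : ∀ b a, 0 ≤ (if 0 < π a b then πs a else 0) := by
    intro b a
    split
    · exact hπs0 a
    · exact le_rfl
  have hP0 : ∀ b, 0 ≤ P b := fun b => Finset.sum_nonneg (fun a _ => hyb b a)
  have hPpos : ∀ b, 0 < πt b → 0 < P b := by
    intro b hb
    obtain ⟨a, -, ha⟩ : ∃ a ∈ Finset.univ, 0 < π a b := by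
      by_contra hc
      push_neg at hc
      have : πt b = 0 := Finset.sum_eq_zero
        (fun a _ => le_antisymm (hc a (Finset.mem_univ a)) (h0 a b))
      rw [this] at hb; exact lt_irrefl 0 hb
    have h1 : (if 0 < π a b then πs a else 0) = πs a := if_pos ha
    have h2 : 0 < πs a := lt_of_lt_of_le ha
      (Finset.single_le_sum (fun b' _ => h0 a b') (Finset.mem_univ b))
    calc (0:ℝ) < πs a := h2
      _ = (if 0 < π a b then πs a else 0) := h1.symm
      _ ≤ P b := Finset.single_le_sum
        (f := fun a' => if 0 < π a' b then πs a' else 0)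
        (fun a' _ => hyb b a') (Finset.mem_univ a)
  -- per-fiber log-sum inequality
  have perb : ∀ b : T, πt b * Real.log (πt b / P b)
      ≤ ∑ a : S, π a b * Real.log (π a b / πs a) := by
    intro b
    have hls := log_sum_ineq (Finset.univ : Finset S)
      (fun a => π a b) (fun a => if 0 < π a b then πs a else 0)
      (fun a _ => h0 a b)
      (fun a _ => hyb b a)
      (by
        intro a _ hz
        by_contra hne
        have hpos : 0 < π a b := lt_of_le_of_ne (h0 a b) (Ne.symm hne)
        rw [if_pos hpos] at hz
        have : 0 < πs a := lt_of_lt_of_le hpos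
          (Finset.single_le_sum (fun b' _ => h0 a b') (Finset.mem_univ b))
        rw [hz] at this; exact lt_irrefl 0 this)
    refine le_trans hls (le_of_eq (Finset.sum_congr rfl ?_))
    intro a _
    rcases eq_or_lt_of_le (h0 a b) with h | h
    · rw [← h]; simp
    · rw [if_pos h]
  -- pointwise identities
  have idB : ∀ b : T, πt b * Real.log (πt b / P b)
      = -Real.negMulLog (πt b) + πt b * (-Real.log (P b)) := by
    intro b
    rcases eq_or_lt_of_le (hπt0 b) with h | h
    · rw [← h]; simp [Real.negMulLog]
    · rw [Real.log_div (ne_of_gt h) (ne_of_gt (hPpos b h))]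
      simp [Real.negMulLog]; ring
  have idA : ∀ a b, π a b * Real.log (π a b / πs a)
      = -Real.negMulLog (π a b) - π a b * Real.log (πs a) := by
    intro a b
    rcases eq_or_lt_of_le (h0 a b) with h | h
    · rw [← h]; simp [Real.negMulLog]
    · have hsa : 0 < πs a := lt_of_lt_of_le h
        (Finset.single_le_sum (fun b' _ => h0 a b') (Finset.mem_univ b))
      rw [Real.log_div (ne_of_gt h) (ne_of_gt hsa)]
      simp [Real.negMulLog]; ring
  have hsum := Finset.sum_le_sum (fun b (_ : b ∈ Finset.univ) => perb b)
  rw [Finset.sum_congr rfl (fun b _ => idB b)] at hsum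
  rw [Finset.sum_congr rfl (fun b _ =>
    Finset.sum_congr rfl (fun a (_ : a ∈ Finset.univ) => idA a b))] at hsum
  rw [Finset.sum_add_distrib] at hsum
  have e1 : ∑ b : T, ∑ a : S, (-Real.negMulLog (π a b) - π a b * Real.log (πs a))
      = -(∑ a : S, ∑ b : T, Real.negMulLog (π a b)) - ∑ a : S, πs a * Real.log (πs a) := by
    rw [Finset.sum_comm]
    have inner : ∀ a : S, ∑ b : T, (-Real.negMulLog (π a b) - π a b * Real.log (πs a))
        = (∑ b : T, -Real.negMulLog (π a b)) - πs a * Real.log (πs a) := by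
      intro a
      rw [Finset.sum_sub_distrib, ← Finset.sum_mul]
    rw [Finset.sum_congr rfl (fun a _ => inner a), Finset.sum_sub_distrib]
    simp [Finset.sum_neg_distrib]
  rw [e1] at hsum
  have e2 : ∑ b : T, -Real.negMulLog (πt b) = -∑ b : T, Real.negMulLog (πt b) :=
    Finset.sum_neg_distrib _
  rw [e2] at hsum
  have e3 : ∑ a : S, πs a * Real.log (πs a) = -∑ a : S, Real.negMulLog (πs a) := by
    simp [Real.negMulLog, Finset.sum_neg_distrib]
  rw [e3] at hsum
  linarith

lemma markov_quantity_le_info {S T : Type*} [Fintype S] [Fintype T]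
    (π p : S → T → ℝ)
    (hπ0 : ∀ a b, 0 ≤ π a b) (hπp : ∀ a b, π a b ≤ p a b)
    (hp1 : ∑ a : S, ∑ b : T, p a b = 1) :
    ∑ b : T, (∑ a : S, π a b) *
        (-Real.log (∑ a : S, (if 0 < π a b then (∑ b' : T, π a b') else 0)))
      ≤ ((∑ a : S, Real.negMulLog (∑ b : T, p a b))
          + (∑ b : T, Real.negMulLog (∑ a : S, p a b))
          - ∑ a : S, ∑ b : T, Real.negMulLog (p a b)) + 2 * Real.log 2 := by
  classical
  set ρ : S → T → ℝ := fun a b => p a b - π a b with hρdef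
  have hρ0 : ∀ a b, 0 ≤ ρ a b := fun a b => by simp [hρdef, hπp a b]
  have hπsum0 : 0 ≤ ∑ a : S, ∑ b : T, π a b :=
    Finset.sum_nonneg (fun a _ => Finset.sum_nonneg (fun b _ => hπ0 a b))
  have hρsum : ∑ a : S, ∑ b : T, ρ a b = 1 - ∑ a : S, ∑ b : T, π a b := by
    rw [← hp1]
    rw [← Finset.sum_sub_distrib]
    apply Finset.sum_congr rfl
    intro a _
    rw [← Finset.sum_sub_distrib]
  have h1 := markov_quantity_le π hπ0
  have h2 := subinfo_nonneg ρ hρ0 (by rw [hρsum]; linarith)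
  -- marginal splitting
  have hms : ∀ a : S, (∑ b : T, π a b) + (∑ b : T, ρ a b) = ∑ b : T, p a b := by
    intro a
    rw [← Finset.sum_add_distrib]
    apply Finset.sum_congr rfl
    intro b _
    simp [hρdef]
  have hmt : ∀ b : T, (∑ a : S, π a b) + (∑ a : S, ρ a b) = ∑ a : S, p a b := by
    intro b
    rw [← Finset.sum_add_distrib]
    apply Finset.sum_congr rfl
    intro a _
    simp [hρdef]
  have hπs0 : ∀ a, 0 ≤ ∑ b : T, π a b := fun a => Finset.sum_nonneg (fun b _ => hπ0 a b)
  have hπt0 : ∀ b, 0 ≤ ∑ a : S, π a b := fun b => Finset.sum_nonneg (fun a _ => hπ0 a b)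
  have hρs0 : ∀ a, 0 ≤ ∑ b : T, ρ a b := fun a => Finset.sum_nonneg (fun b _ => hρ0 a b)
  have hρt0 : ∀ b, 0 ≤ ∑ a : S, ρ a b := fun b => Finset.sum_nonneg (fun a _ => hρ0 a b)
  have c1 : (∑ a : S, Real.negMulLog (∑ b : T, π a b))
      + (∑ a : S, Real.negMulLog (∑ b : T, ρ a b))
      ≤ (∑ a : S, Real.negMulLog (∑ b : T, p a b)) + Real.log 2 := by
    have step : ∀ a : S, Real.negMulLog (∑ b : T, π a b) + Real.negMulLog (∑ b : T, ρ a b)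
        ≤ Real.negMulLog (∑ b : T, p a b) + (∑ b : T, p a b) * Real.log 2 := by
      intro a
      have := negMulLog_add_le (∑ b : T, π a b) (∑ b : T, ρ a b) (hπs0 a) (hρs0 a)
      rwa [hms a] at this
    have := Finset.sum_le_sum (fun a (_ : a ∈ Finset.univ) => step a)
    rw [Finset.sum_add_distrib, Finset.sum_add_distrib, ← Finset.sum_mul, hp1] at this
    linarith
  have c2 : (∑ b : T, Real.negMulLog (∑ a : S, π a b))
      + (∑ b : T, Real.negMulLog (∑ a : S, ρ a b))
      ≤ (∑ b : T, Real.negMulLog (∑ a : S, p a b)) + Real.log 2 := by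
    have step : ∀ b : T, Real.negMulLog (∑ a : S, π a b) + Real.negMulLog (∑ a : S, ρ a b)
        ≤ Real.negMulLog (∑ a : S, p a b) + (∑ a : S, p a b) * Real.log 2 := by
      intro b
      have := negMulLog_add_le (∑ a : S, π a b) (∑ a : S, ρ a b) (hπt0 b) (hρt0 b)
      rwa [hmt b] at this
    have := Finset.sum_le_sum (fun b (_ : b ∈ Finset.univ) => step b)
    rw [Finset.sum_add_distrib, Finset.sum_add_distrib, ← Finset.sum_mul] at this
    rw [show ∑ b : T, ∑ a : S, p a b = 1 by rw [Finset.sum_comm]; exact hp1] at this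
    linarith
  have c3 : ∑ a : S, ∑ b : T, Real.negMulLog (p a b)
      ≤ (∑ a : S, ∑ b : T, Real.negMulLog (π a b))
        + ∑ a : S, ∑ b : T, Real.negMulLog (ρ a b) := by
    rw [← Finset.sum_add_distrib]
    apply Finset.sum_le_sum
    intro a _
    rw [← Finset.sum_add_distrib]
    apply Finset.sum_le_sum
    intro b _
    have := negMulLog_superadd (π a b) (ρ a b) (hπ0 a b) (hρ0 a b)
    rwa [show π a b + ρ a b = p a b by simp [hρdef]] at this
  linarith

lemma cover_exists {S T : Type*} [Fintype S] [Fintype T]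
    (π : S → T → ℝ) (h0 : ∀ a b, 0 ≤ π a b)
    (hm1 : ∑ a : S, ∑ b : T, π a b ≤ 1)
    (δ : ℝ) (hδ0 : 0 < δ) (hδ1 : δ < 1) :
    ∀ k : ℕ, ∃ V : Finset S, (∀ a ∈ V, 0 < ∑ b : T, π a b) ∧ V.card ≤ k ∧
      ∑ b ∈ Finset.univ.filter (fun b : T =>
          δ ≤ (∑ a : S, (if 0 < π a b then (∑ b' : T, π a b') else 0))
          ∧ ¬∃ a ∈ V, 0 < π a b), (∑ a : S, π a b) ≤ (1-δ)^k := by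
  classical
  have hπt0 : ∀ b : T, 0 ≤ ∑ a : S, π a b :=
    fun b => Finset.sum_nonneg (fun a _ => h0 a b)
  have hπs0 : ∀ a : S, 0 ≤ ∑ b : T, π a b :=
    fun a => Finset.sum_nonneg (fun b _ => h0 a b)
  intro k
  induction k with
  | zero =>
    refine ⟨∅, by simp, by simp, ?_⟩
    rw [pow_zero]
    calc ∑ b ∈ Finset.univ.filter _, (∑ a : S, π a b)
        ≤ ∑ b : T, (∑ a : S, π a b) :=
          Finset.sum_le_sum_of_subset_of_nonneg (Finset.filter_subset _ _)
            (fun b _ _ => hπt0 b)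
      _ = ∑ a : S, ∑ b : T, π a b := Finset.sum_comm
      _ ≤ 1 := hm1
  | succ k ih =>
    obtain ⟨V, hV1, hV2, hV3⟩ := ih
    set W := Finset.univ.filter (fun b : T =>
      δ ≤ (∑ a : S, (if 0 < π a b then (∑ b' : T, π a b') else 0))
      ∧ ¬∃ a ∈ V, 0 < π a b) with hWdef
    set mW := ∑ b ∈ W, (∑ a : S, π a b) with hmW
    by_cases hc : mW ≤ (1-δ)^(k+1)
    · exact ⟨V, hV1, le_trans hV2 (Nat.le_succ k), hc⟩
    · push_neg at hc
      have hmWpos : 0 < mW := lt_of_le_of_lt (pow_nonneg (by linarith) _) hc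
      -- averaging
      set c : S → ℝ := fun a => ∑ b ∈ W.filter (fun b => 0 < π a b), (∑ a' : S, π a' b)
        with hcdef
      have hc0 : ∀ a, 0 ≤ c a := fun a => Finset.sum_nonneg (fun b _ => hπt0 b)
      have havg : δ * mW ≤ ∑ a : S, (∑ b : T, π a b) * c a := by
        have step1 : δ * mW ≤ ∑ b ∈ W, (∑ a : S, π a b) *
            (∑ a : S, (if 0 < π a b then (∑ b' : T, π a b') else 0)) := by
          rw [hmW, Finset.mul_sum]
          apply Finset.sum_le_sum
          intro b hb
          have hbW := (Finset.mem_filter.1 hb).2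
          calc δ * (∑ a : S, π a b)
              = (∑ a : S, π a b) * δ := mul_comm _ _
            _ ≤ (∑ a : S, π a b) *
                (∑ a : S, (if 0 < π a b then (∑ b' : T, π a b') else 0)) :=
              mul_le_mul_of_nonneg_left hbW.1 (hπt0 b)
        have step2 : ∑ b ∈ W, (∑ a : S, π a b) *
            (∑ a : S, (if 0 < π a b then (∑ b' : T, π a b') else 0))
            = ∑ a : S, (∑ b : T, π a b) * c a := by
          have e1 : ∀ b ∈ W, (∑ a : S, π a b) *
              (∑ a : S, (if 0 < π a b then (∑ b' : T, π a b') else 0))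
              = ∑ a : S, (if 0 < π a b then (∑ a' : S, π a' b) * (∑ b' : T, π a b') else 0) := by
            intro b _
            rw [Finset.mul_sum]
            apply Finset.sum_congr rfl
            intro a _
            rw [mul_ite, mul_zero]
          rw [Finset.sum_congr rfl e1, Finset.sum_comm]
          apply Finset.sum_congr rfl
          intro a _
          rw [← Finset.sum_filter, hcdef]
          dsimp only
          rw [Finset.mul_sum]
          apply Finset.sum_congr rfl
          intro b _
          exact mul_comm _ _
        rw [← step2]; exact step1
      -- there is a good element
      have hSp : ∃ a : S, 0 < ∑ b : T, π a b := by
        obtain ⟨b, hbW, hbpos⟩ : ∃ b ∈ W, 0 < ∑ a : S, π a b := by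
          by_contra hcon
          push_neg at hcon
          have : mW ≤ 0 := by
            rw [hmW]
            apply Finset.sum_nonpos
            intro b hb
            exact hcon b hb
          linarith
        obtain ⟨a, -, hapos⟩ : ∃ a ∈ Finset.univ, 0 < π a b := by
          by_contra hcon
          push_neg at hcon
          have : (∑ a : S, π a b) = 0 := Finset.sum_eq_zero
            (fun a ha => le_antisymm (hcon a ha) (h0 a b))
          rw [this] at hbpos; exact lt_irrefl 0 hbpos
        exact ⟨a, lt_of_lt_of_le hapos
          (Finset.single_le_sum (fun b' _ => h0 a b') (Finset.mem_univ b))⟩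
      obtain ⟨a1, ha1⟩ := hSp
      set Sp := Finset.univ.filter (fun a : S => 0 < ∑ b : T, π a b) with hSpdef
      have hSpne : Sp.Nonempty := ⟨a1, Finset.mem_filter.2 ⟨Finset.mem_univ a1, ha1⟩⟩
      obtain ⟨a0, ha0mem, ha0max⟩ := Finset.exists_max_image Sp c hSpne
      have ha0pos : 0 < ∑ b : T, π a0 b := (Finset.mem_filter.1 ha0mem).2
      have hca0 : δ * mW ≤ c a0 := by
        have h1 : ∑ a : S, (∑ b : T, π a b) * c a
            ≤ ∑ a : S, (∑ b : T, π a b) * c a0 := by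
          apply Finset.sum_le_sum
          intro a _
          rcases eq_or_lt_of_le (hπs0 a) with h | h
          · rw [← h, zero_mul, zero_mul]
          · exact mul_le_mul_of_nonneg_left
              (ha0max a (Finset.mem_filter.2 ⟨Finset.mem_univ a, h⟩)) (le_of_lt h)
        have h2 : ∑ a : S, (∑ b : T, π a b) * c a0 = (∑ a : S, ∑ b : T, π a b) * c a0 :=
          (Finset.sum_mul _ _ _).symm
        have h3 : (∑ a : S, ∑ b : T, π a b) * c a0 ≤ 1 * c a0 :=
          mul_le_mul_of_nonneg_right hm1 (hc0 a0)
        calc δ * mW ≤ ∑ a : S, (∑ b : T, π a b) * c a := havg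
          _ ≤ _ := h1
          _ = _ := h2
          _ ≤ 1 * c a0 := h3
          _ = c a0 := one_mul _
      refine ⟨insert a0 V, ?_, ?_, ?_⟩
      · intro a ha
        rcases Finset.mem_insert.1 ha with h | h
        · rw [h]; exact ha0pos
        · exact hV1 a h
      · exact le_trans (Finset.card_insert_le a0 V) (Nat.succ_le_succ hV2)
      · have hWeq : Finset.univ.filter (fun b : T =>
            δ ≤ (∑ a : S, (if 0 < π a b then (∑ b' : T, π a b') else 0))
            ∧ ¬∃ a ∈ insert a0 V, 0 < π a b)
            = W.filter (fun b => ¬ 0 < π a0 b) := by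
          rw [hWdef, Finset.filter_filter]
          apply Finset.filter_congr
          intro b _
          simp only [Finset.mem_insert]
          constructor
          · rintro ⟨h1, h2⟩
            refine ⟨⟨h1, ?_⟩, ?_⟩
            · intro ⟨a, haV, hapos⟩
              exact h2 ⟨a, Or.inr haV, hapos⟩
            · intro hpos
              exact h2 ⟨a0, Or.inl rfl, hpos⟩
          · rintro ⟨⟨h1, h2⟩, h3⟩
            refine ⟨h1, ?_⟩
            rintro ⟨a, ha, hapos⟩
            rcases ha with rfl | ha
            · exact h3 hapos
            · exact h2 ⟨a, ha, hapos⟩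
        rw [hWeq]
        have hsplit := Finset.sum_filter_add_sum_filter_not W
          (fun b => 0 < π a0 b) (fun b => ∑ a : S, π a b)
        have hceq : ∑ b ∈ W.filter (fun b => 0 < π a0 b), (∑ a : S, π a b) = c a0 := rfl
        have : ∑ b ∈ W.filter (fun b => ¬ 0 < π a0 b), (∑ a : S, π a b)
            = mW - c a0 := by
          rw [hmW, ← hsplit, hceq]; ring
        rw [this]
        have hstep : mW - c a0 ≤ (1-δ) * mW := by linarith
        calc mW - c a0 ≤ (1-δ) * mW := hstep
          _ ≤ (1-δ) * (1-δ)^k := mul_le_mul_of_nonneg_left hV3 (by linarith)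
          _ = (1-δ)^(k+1) := by rw [pow_succ]; ring

lemma core_cover {S T : Type*} [Fintype S] [Fintype T]
    (π p : S → T → ℝ)
    (hπ0 : ∀ a b, 0 ≤ π a b) (hπp : ∀ a b, π a b ≤ p a b)
    (hp1 : ∑ a : S, ∑ b : T, p a b = 1)
    (η : ℝ) (hη : 0 < η) (hη1 : η < 1) :
    ∃ V : Finset S,
      (∀ a ∈ V, 0 < ∑ b : T, π a b) ∧
      Real.log V.card ≤
        ((3/η) * (2*Real.log 2 + 1) + Real.log (Real.log (3/η) + 1) + 1) *
          (((∑ a : S, Real.negMulLog (∑ b : T, p a b))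
            + (∑ b : T, Real.negMulLog (∑ a : S, p a b))
            - ∑ a : S, ∑ b : T, Real.negMulLog (p a b)) + 1) ∧
      (∑ a : S, ∑ b : T, π a b) - η <
        ∑ b ∈ Finset.univ.filter (fun b : T => ∃ a ∈ V, 0 < π a b),
          (∑ a : S, π a b) := by
  classical
  have hp0 : ∀ a b, 0 ≤ p a b := fun a b => le_trans (hπ0 a b) (hπp a b)
  set I := (∑ a : S, Real.negMulLog (∑ b : T, p a b))
      + (∑ b : T, Real.negMulLog (∑ a : S, p a b))
      - ∑ a : S, ∑ b : T, Real.negMulLog (p a b) with hIdef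
  have hI0 : 0 ≤ I := subinfo_nonneg p hp0 (le_of_eq hp1)
  have hlog2 : 0 < Real.log 2 := Real.log_pos (by norm_num)
  set M := I + 2 * Real.log 2 + 1 with hMdef
  have hM1 : 1 ≤ M := by rw [hMdef]; linarith
  have hMpos : 0 < M := lt_of_lt_of_le one_pos hM1
  have h3η : 0 < 3 / η := by positivity
  set δ := Real.exp (-(3*M/η)) with hδdef
  have hδ0 : 0 < δ := Real.exp_pos _
  have hδ1 : δ < 1 := by
    rw [hδdef]
    apply Real.exp_lt_one_iff.mpr  -- check name
    have : 0 < 3*M/η := by positivity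
    linarith
  have hlogδ : Real.log δ = -(3*M/η) := Real.log_exp _
  -- total masses
  have hπt0 : ∀ b : T, 0 ≤ ∑ a : S, π a b :=
    fun b => Finset.sum_nonneg (fun a _ => hπ0 a b)
  have hπs0 : ∀ a : S, 0 ≤ ∑ b : T, π a b :=
    fun a => Finset.sum_nonneg (fun b _ => hπ0 a b)
  have hm1 : ∑ a : S, ∑ b : T, π a b ≤ 1 := by
    rw [← hp1]
    apply Finset.sum_le_sum
    intro a _
    exact Finset.sum_le_sum (fun b _ => hπp a b)
  -- bound on P b
  have hP0 : ∀ b : T, 0 ≤ ∑ a : S, (if 0 < π a b then (∑ b' : T, π a b') else 0) := by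
    intro b
    apply Finset.sum_nonneg
    intro a _
    split
    · exact hπs0 a
    · exact le_rfl
  have hPle : ∀ b : T, (∑ a : S, (if 0 < π a b then (∑ b' : T, π a b') else 0)) ≤ 1 := by
    intro b
    calc ∑ a : S, (if 0 < π a b then (∑ b' : T, π a b') else 0)
        ≤ ∑ a : S, ∑ b' : T, π a b' := by
          apply Finset.sum_le_sum
          intro a _
          split
          · exact le_rfl
          · exact hπs0 a
      _ ≤ 1 := hm1
  -- nonneg terms of L
  have hLt0 : ∀ b : T, 0 ≤ (∑ a : S, π a b) *
      (-Real.log (∑ a : S, (if 0 < π a b then (∑ b' : T, π a b') else 0))) := by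
    intro b
    apply mul_nonneg (hπt0 b)
    rw [neg_nonneg]
    exact Real.log_nonpos (hP0 b) (hPle b)
  have hL := markov_quantity_le_info π p hπ0 hπp hp1
  rw [← hIdef] at hL
  -- Markov: mass of bad fibers
  set Bad := Finset.univ.filter (fun b : T => 0 < (∑ a : S, π a b) ∧
    (∑ a : S, (if 0 < π a b then (∑ b' : T, π a b') else 0)) < δ) with hBaddef
  have hBad : ∑ b ∈ Bad, (∑ a : S, π a b) ≤ η / 3 := by
    have key : ∀ b ∈ Bad, (∑ a : S, π a b) * (3*M/η) ≤ (∑ a : S, π a b) *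
        (-Real.log (∑ a : S, (if 0 < π a b then (∑ b' : T, π a b') else 0))) := by
      intro b hb
      obtain ⟨hb1, hb2⟩ := (Finset.mem_filter.1 hb).2
      apply mul_le_mul_of_nonneg_left _ (hπt0 b)
      have hPpos : 0 < ∑ a : S, (if 0 < π a b then (∑ b' : T, π a b') else 0) := by
        obtain ⟨a, -, ha⟩ : ∃ a ∈ Finset.univ, 0 < π a b := by
          by_contra hcon
          push_neg at hcon
          have : (∑ a : S, π a b) = 0 := Finset.sum_eq_zero
            (fun a ha => le_antisymm (hcon a ha) (hπ0 a b))
          rw [this] at hb1; exact lt_irrefl 0 hb1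
        have h2 : 0 < ∑ b' : T, π a b' := lt_of_lt_of_le ha
          (Finset.single_le_sum (fun b' _ => hπ0 a b') (Finset.mem_univ b))
        calc (0:ℝ) < ∑ b' : T, π a b' := h2
          _ = (if 0 < π a b then (∑ b' : T, π a b') else 0) := (if_pos ha).symm
          _ ≤ _ := Finset.single_le_sum
            (f := fun a' => if 0 < π a' b then (∑ b' : T, π a' b') else 0)
            (fun a' _ => by
              by_cases h : 0 < π a' b
              · rw [if_pos h]; exact hπs0 a'
              · rw [if_neg h])
            (Finset.mem_univ a)
      have := Real.log_lt_log hPpos hb2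
      rw [hlogδ] at this
      linarith
    have h1 : (∑ b ∈ Bad, (∑ a : S, π a b)) * (3*M/η)
        ≤ ∑ b ∈ Bad, (∑ a : S, π a b) *
          (-Real.log (∑ a : S, (if 0 < π a b then (∑ b' : T, π a b') else 0))) := by
      rw [Finset.sum_mul]
      exact Finset.sum_le_sum key
    have h2 : ∑ b ∈ Bad, (∑ a : S, π a b) *
        (-Real.log (∑ a : S, (if 0 < π a b then (∑ b' : T, π a b') else 0)))
        ≤ ∑ b : T, (∑ a : S, π a b) *
          (-Real.log (∑ a : S, (if 0 < π a b then (∑ b' : T, π a b') else 0))) :=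
      Finset.sum_le_sum_of_subset_of_nonneg (Finset.filter_subset _ _)
        (fun b _ _ => hLt0 b)
    have h3 : (∑ b ∈ Bad, (∑ a : S, π a b)) * (3*M/η) ≤ M := by
      calc (∑ b ∈ Bad, (∑ a : S, π a b)) * (3*M/η) ≤ _ := h1
        _ ≤ _ := h2
        _ ≤ I + 2*Real.log 2 := hL
        _ ≤ M := by rw [hMdef]; linarith
    have h4 : 0 < 3*M/η := by positivity
    have := (le_div_iff₀ h4).mpr h3
    calc ∑ b ∈ Bad, (∑ a : S, π a b) ≤ M / (3*M/η) := this
      _ = η / 3 := by field_simp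
  -- the number of steps
  set L3 := Real.log (3/η) with hL3def
  have hL3pos : 0 < L3 := Real.log_pos (by rw [lt_div_iff₀ hη]; linarith)
  set k := ⌈L3 / δ⌉₊ with hkdef
  have hk1 : 1 ≤ k := by
    rw [hkdef]
    rw [Nat.one_le_ceil_iff]
    positivity
  have hkR : 0 < (k:ℝ) := by exact_mod_cast hk1
  -- coverage from greedy
  obtain ⟨V, hV1, hV2, hV3⟩ := cover_exists π hπ0 hm1 δ hδ0 hδ1 k
  have hpow : (1-δ)^k ≤ η/3 := by
    have e1 : (1-δ) ≤ Real.exp (-δ) := by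
      have := Real.add_one_le_exp (-δ)
      linarith
    have e2 : (1-δ)^k ≤ (Real.exp (-δ))^k := pow_le_pow_left₀ (by linarith) e1 k
    have e3 : (Real.exp (-δ))^k = Real.exp ((k:ℝ) * (-δ)) := (Real.exp_nat_mul _ k).symm
    have e4 : Real.exp ((k:ℝ) * (-δ)) ≤ η/3 := by
      rw [show (η/3 : ℝ) = Real.exp (Real.log (η/3)) from (Real.exp_log (by positivity)).symm]
      apply Real.exp_le_exp.mpr
      have hlog : Real.log (η/3) = -L3 := by
        rw [hL3def, ← Real.log_inv]
        congr 1
        field_simp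
      rw [hlog]
      have : L3 ≤ δ * k := by
        have := Nat.le_ceil (L3 / δ)
        rw [← hkdef] at this
        rw [div_le_iff₀ hδ0] at this
        linarith [this]
      linarith
    calc (1-δ)^k ≤ (Real.exp (-δ))^k := e2
      _ = _ := e3
      _ ≤ η/3 := e4
  -- card bound
  have hcard : Real.log V.card ≤
      ((3/η) * (2*Real.log 2 + 1) + Real.log (L3 + 1) + 1) * (I + 1) := by
    have hC0 : 0 < (3/η) * (2*Real.log 2 + 1) + Real.log (L3 + 1) + 1 := by
      have : 0 ≤ Real.log (L3 + 1) := Real.log_nonneg (by linarith)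
      positivity
    rcases Nat.eq_zero_or_pos V.card with h | h
    · rw [h]
      simp only [Nat.cast_zero, Real.log_zero]
      positivity
    · have hVk : (V.card : ℝ) ≤ k := by exact_mod_cast le_trans hV2 (le_refl k)
      have hVpos : 0 < (V.card : ℝ) := by exact_mod_cast h
      have s1 : Real.log V.card ≤ Real.log k := Real.log_le_log hVpos hVk
      have s2 : (k:ℝ) ≤ (L3 + 1) / δ := by
        have c1 : (k:ℝ) < L3/δ + 1 := by
          rw [hkdef]
          exact Nat.ceil_lt_add_one (by positivity)
        have c2 : (1:ℝ) ≤ 1/δ := by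
          rw [le_div_iff₀ hδ0]; linarith
        have : L3/δ + 1 ≤ L3/δ + 1/δ := by linarith
        have e : L3/δ + 1/δ = (L3+1)/δ := by field_simp
        linarith
      have s3 : Real.log k ≤ Real.log ((L3+1)/δ) := Real.log_le_log hkR s2
      have s4 : Real.log ((L3+1)/δ) = Real.log (L3+1) + 3*M/η := by
        rw [Real.log_div (by linarith) (ne_of_gt hδ0), hlogδ]
        ring
      have s5 : Real.log (L3+1) + 3*M/η ≤
          ((3/η) * (2*Real.log 2 + 1) + Real.log (L3 + 1) + 1) * (I + 1) := by
        have e3 : 0 ≤ Real.log (L3+1) := Real.log_nonneg (by linarith)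
        have e2 : (3/η) * I ≤ ((3/η) * (2*Real.log 2 + 1) + Real.log (L3 + 1) + 1) * I := by
          have q1 : (3/η) * 1 ≤ (3/η) * (2*Real.log 2 + 1) := by
            apply mul_le_mul_of_nonneg_left _ (le_of_lt h3η)
            linarith
          apply mul_le_mul_of_nonneg_right _ hI0
          linarith [q1]
        have e4 : ((3/η) * (2*Real.log 2 + 1) + Real.log (L3 + 1) + 1) * (I + 1)
            = ((3/η) * (2*Real.log 2 + 1) + Real.log (L3 + 1) + 1) * I
              + ((3/η) * (2*Real.log 2 + 1) + Real.log (L3 + 1) + 1) := by ring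
        have e5 : 3*M/η = (3/η)*I + (3/η)*(2*Real.log 2+1) := by
          rw [hMdef]; field_simp; ring
        rw [e4, e5]
        linarith [e2]
      rw [s4] at s3
      linarith
  refine ⟨V, hV1, hcard, ?_⟩
  -- coverage accounting
  have htot := Finset.sum_filter_add_sum_filter_not Finset.univ
    (fun b : T => ∃ a ∈ V, 0 < π a b) (fun b => ∑ a : S, π a b)
  have hmeq : ∑ b : T, (∑ a : S, π a b) = ∑ a : S, ∑ b : T, π a b := Finset.sum_comm
  set Unc := Finset.univ.filter (fun b : T => ¬ ∃ a ∈ V, 0 < π a b) with hUncdef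
  have hz : ∑ b ∈ Unc, (∑ a : S, π a b)
      = ∑ b ∈ Unc.filter (fun b => 0 < ∑ a : S, π a b), (∑ a : S, π a b) := by
    rw [eq_comm]
    apply Finset.sum_subset (Finset.filter_subset _ _)
    intro b hb hnb
    rcases eq_or_lt_of_le (hπt0 b) with h | h
    · exact h.symm
    · exact absurd (Finset.mem_filter.2 ⟨hb, h⟩) hnb
  set GoodUnc := Finset.univ.filter (fun b : T =>
      δ ≤ (∑ a : S, (if 0 < π a b then (∑ b' : T, π a b') else 0))
      ∧ ¬∃ a ∈ V, 0 < π a b) with hGU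
  have hsub : Unc.filter (fun b => 0 < ∑ a : S, π a b) ⊆ Bad ∪ GoodUnc := by
    intro b hb
    obtain ⟨hb1, hb2⟩ := Finset.mem_filter.1 hb
    obtain ⟨-, hb3⟩ := Finset.mem_filter.1 hb1
    by_cases hP : (∑ a : S, (if 0 < π a b then (∑ b' : T, π a b') else 0)) < δ
    · exact Finset.mem_union_left _ (Finset.mem_filter.2 ⟨Finset.mem_univ b, hb2, hP⟩)
    · push_neg at hP
      exact Finset.mem_union_right _ (Finset.mem_filter.2 ⟨Finset.mem_univ b, hP, hb3⟩)
  have hdisj : Disjoint Bad GoodUnc := by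
    rw [Finset.disjoint_left]
    intro b h1 h2
    have u1 := (Finset.mem_filter.1 h1).2.2
    have u2 := (Finset.mem_filter.1 h2).2.1
    linarith
  have hbound : ∑ b ∈ Unc, (∑ a : S, π a b) ≤ η/3 + η/3 := by
    rw [hz]
    calc ∑ b ∈ Unc.filter (fun b => 0 < ∑ a : S, π a b), (∑ a : S, π a b)
        ≤ ∑ b ∈ Bad ∪ GoodUnc, (∑ a : S, π a b) :=
          Finset.sum_le_sum_of_subset_of_nonneg hsub (fun b _ _ => hπt0 b)
      _ = (∑ b ∈ Bad, (∑ a : S, π a b)) + ∑ b ∈ GoodUnc, (∑ a : S, π a b) :=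
          Finset.sum_union hdisj
      _ ≤ η/3 + η/3 := add_le_add hBad (le_trans hV3 hpow)
  linarith [htot, hmeq, hbound, hη]

end Aux

lemma fiber_split {X T : Type*} [MeasurableSpace X] [Fintype T]
    [MeasurableSpace T] [MeasurableSingletonClass T]
    (μ : Measure X) [IsFiniteMeasure μ] (t : X → T) (ht : Measurable t)
    (A : Set X) (hA : MeasurableSet A) (B : Finset T) :
    (μ (A ∩ t ⁻¹' (↑B : Set T))).toReal = ∑ b ∈ B, (μ (A ∩ t ⁻¹' {b})).toReal := by
  have hU : A ∩ t ⁻¹' (↑B : Set T) = ⋃ b ∈ B, A ∩ t ⁻¹' {b} := by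
    ext x
    simp only [Set.mem_inter_iff, Set.mem_preimage, Set.mem_iUnion,
      Set.mem_singleton_iff, Finset.mem_coe, exists_prop]
    constructor
    · rintro ⟨hxA, hxB⟩; exact ⟨t x, hxB, hxA, rfl⟩
    · rintro ⟨b, hbB, hxA, hxb⟩; exact ⟨hxA, by rw [hxb]; exact hbB⟩
  have hdisj : (↑B : Set T).PairwiseDisjoint (fun b => A ∩ t ⁻¹' {b}) := by
    intro b1 _ b2 _ hne
    apply Set.disjoint_left.mpr
    rintro x ⟨-, hx1⟩ ⟨-, hx2⟩
    simp only [Set.mem_preimage, Set.mem_singleton_iff] at hx1 hx2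
    exact hne (hx1 ▸ hx2 ▸ rfl)
  rw [hU, measure_biUnion_finset hdisj
    (fun b _ => hA.inter (ht (measurableSet_singleton b)))]
  exact ENNReal.toReal_sum (fun b _ => measure_ne_top μ _)

lemma fiber_split_univ {X T : Type*} [MeasurableSpace X] [Fintype T]
    [MeasurableSpace T] [MeasurableSingletonClass T]
    (μ : Measure X) [IsFiniteMeasure μ] (t : X → T) (ht : Measurable t)
    (A : Set X) (hA : MeasurableSet A) :
    (μ A).toReal = ∑ b : T, (μ (A ∩ t ⁻¹' {b})).toReal := by
  have := fiber_split μ t ht A hA Finset.univ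
  rwa [Finset.coe_univ, Set.preimage_univ, Set.inter_univ] at this

/-- **Efficient covering from a mutual-information bound.** -/
theorem efficient_cov_from_mutual_info.{u, v, w} :
    ∀ α η : ℝ, 0 < α → α ≤ 1 → 0 < η → η < α →
    ∃ C : ℝ,
      ∀ (X : Type u) (S : Type v) (T : Type w)
        [MeasurableSpace X] [Fintype S] [MeasurableSpace S] [MeasurableSingletonClass S]
        [Fintype T] [MeasurableSpace T] [MeasurableSingletonClass T]
        (μ : Measure X), IsProbabilityMeasure μ →
      ∀ (s : X → S) (t : X → T), Measurable s → Measurable t →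
      ∀ U : Set X, MeasurableSet U → ENNReal.ofReal α ≤ μ U →
        ∃ S₀ : Finset X, ↑S₀ ⊆ U ∧
          Real.log S₀.card ≤ C * (finMutualInfo μ s t + 1) ∧
          (μ U).toReal - η <
            (μ (U ∩ {x | ∃ w ∈ U, t x = t w ∧ ∃ z ∈ S₀, s w = s z})).toReal := by
  intro α η hα0 hα1 hη0 hηα
  refine ⟨(3/η) * (2*Real.log 2 + 1) + Real.log (Real.log (3/η) + 1) + 1, ?_⟩
  intro X S T _ _ _ _ _ _ _ μ hprob s t hs ht U hU hαU
  haveI := hprob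
  classical
  set π : S → T → ℝ := fun a b => (μ (U ∩ (s ⁻¹' {a} ∩ t ⁻¹' {b}))).toReal with hπdef
  set p : S → T → ℝ := fun a b => (μ (s ⁻¹' {a} ∩ t ⁻¹' {b})).toReal with hpdef
  have hmeas_s : ∀ a : S, MeasurableSet (s ⁻¹' {a}) :=
    fun a => hs (measurableSet_singleton a)
  have hmeas_t : ∀ b : T, MeasurableSet (t ⁻¹' {b}) :=
    fun b => ht (measurableSet_singleton b)
  have hπ0 : ∀ a b, 0 ≤ π a b := fun a b => ENNReal.toReal_nonneg
  have hπp : ∀ a b, π a b ≤ p a b := by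
    intro a b
    rw [hπdef, hpdef]
    exact ENNReal.toReal_mono (measure_ne_top μ _)
      (measure_mono Set.inter_subset_right)
  -- marginal identities
  have hps : ∀ a : S, (μ (s ⁻¹' {a})).toReal = ∑ b : T, p a b :=
    fun a => fiber_split_univ μ t ht _ (hmeas_s a)
  have hπs : ∀ a : S, (μ (U ∩ s ⁻¹' {a})).toReal = ∑ b : T, π a b := by
    intro a
    have := fiber_split_univ μ t ht (U ∩ s ⁻¹' {a}) (hU.inter (hmeas_s a))
    rw [this]
    apply Finset.sum_congr rfl
    intro b _
    rw [hπdef]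
    congr 1
    rw [Set.inter_assoc]
  have hπt : ∀ b : T, (μ (U ∩ t ⁻¹' {b})).toReal = ∑ a : S, π a b := by
    intro b
    have := fiber_split_univ μ s hs (U ∩ t ⁻¹' {b}) (hU.inter (hmeas_t b))
    rw [this]
    apply Finset.sum_congr rfl
    intro a _
    have e : (U ∩ t ⁻¹' {b}) ∩ s ⁻¹' {a} = U ∩ (s ⁻¹' {a} ∩ t ⁻¹' {b}) := by
      ext x
      simp only [Set.mem_inter_iff, Set.mem_preimage, Set.mem_singleton_iff]
      tauto
    rw [hπdef]
    dsimp only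
    rw [e]
  have hpt : ∀ b : T, (μ (t ⁻¹' {b})).toReal = ∑ a : S, p a b := by
    intro b
    have := fiber_split_univ μ s hs (t ⁻¹' {b}) (hmeas_t b)
    rw [this]
    apply Finset.sum_congr rfl
    intro a _
    rw [hpdef]
    dsimp only
    rw [Set.inter_comm (t ⁻¹' {b}) (s ⁻¹' {a})]
  have hp1 : ∑ a : S, ∑ b : T, p a b = 1 := by
    rw [← Finset.sum_congr rfl (fun a (_ : a ∈ Finset.univ) => (hps a))]
    have h2 := fiber_split_univ μ s hs Set.univ MeasurableSet.univ
    simp only [Set.univ_inter] at h2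
    rw [← h2]
    simp
  have hmU : (μ U).toReal = ∑ a : S, ∑ b : T, π a b := by
    rw [← Finset.sum_congr rfl (fun a (_ : a ∈ Finset.univ) => (hπs a))]
    exact fiber_split_univ μ s hs U hU
  have hαm : α ≤ ∑ a : S, ∑ b : T, π a b := by
    rw [← hmU]
    exact (ENNReal.ofReal_le_iff_le_toReal (measure_ne_top μ U)).1 hαU
  -- mutual information identity
  have hMI : finMutualInfo μ s t
      = (∑ a : S, Real.negMulLog (∑ b : T, p a b))
        + (∑ b : T, Real.negMulLog (∑ a : S, p a b))
        - ∑ a : S, ∑ b : T, Real.negMulLog (p a b) := by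
    rw [finMutualInfo, finEntropy, finEntropy, finEntropy]
    congr 1
    congr 1
    · exact Finset.sum_congr rfl (fun a _ => by rw [hps a])
    · exact Finset.sum_congr rfl (fun b _ => by rw [hpt b])
    · rw [Fintype.sum_prod_type]
      apply Finset.sum_congr rfl
      intro a _
      apply Finset.sum_congr rfl
      intro b _
      have e : (fun x => (s x, t x)) ⁻¹' {(a, b)} = s ⁻¹' {a} ∩ t ⁻¹' {b} := by
        ext x
        simp [Prod.ext_iff]
      rw [hpdef]
      dsimp only
      rw [e]
  -- apply the core lemma
  obtain ⟨V, hV1, hV2, hV3⟩ := core_cover π p hπ0 hπp hp1 η hη0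
    (lt_of_lt_of_le hηα hα1)
  -- choose representative points
  have hVne : ∀ a ∈ V, (U ∩ s ⁻¹' {a}).Nonempty := by
    intro a ha
    have hpos := hV1 a ha
    rw [← hπs a] at hpos
    have hne : μ (U ∩ s ⁻¹' {a}) ≠ 0 := by
      intro h
      rw [h] at hpos
      simp at hpos
    exact nonempty_of_measure_ne_zero hne
  set S₀ : Finset X := V.attach.image (fun a => (hVne a.1 a.2).some) with hS₀def
  have hS₀sub : ↑S₀ ⊆ U := by
    intro x hx
    simp only [hS₀def, Finset.coe_image, Set.mem_image, Finset.mem_coe] at hx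
    obtain ⟨a, -, rfl⟩ := hx
    exact ((hVne a.1 a.2).some_mem).1
  refine ⟨S₀, hS₀sub, ?_, ?_⟩
  · -- cardinality bound
    rw [hMI]
    have hcard : S₀.card ≤ V.card := by
      calc S₀.card ≤ V.attach.card := Finset.card_image_le
        _ = V.card := Finset.card_attach
    have h1 : Real.log S₀.card ≤ Real.log V.card := by
      rcases Nat.eq_zero_or_pos S₀.card with h | h
      · rw [h]
        simp only [Nat.cast_zero, Real.log_zero]
        rcases Nat.eq_zero_or_pos V.card with h' | h'
        · rw [h']; simp
        · apply Real.log_nonneg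
          exact_mod_cast h'
      · exact Real.log_le_log (by exact_mod_cast h) (by exact_mod_cast hcard)
    exact le_trans h1 hV2
  · -- coverage bound
    set B := Finset.univ.filter (fun b : T => ∃ a ∈ V, 0 < π a b) with hBdef
    have hcov : U ∩ t ⁻¹' (↑B : Set T)
        ⊆ U ∩ {x | ∃ w ∈ U, t x = t w ∧ ∃ z ∈ S₀, s w = s z} := by
      rintro x ⟨hxU, hxB⟩
      refine ⟨hxU, ?_⟩
      simp only [Set.mem_preimage, Finset.mem_coe, hBdef, Finset.mem_filter] at hxB
      obtain ⟨-, a, haV, hapos⟩ := hxB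
      have hne : (U ∩ (s ⁻¹' {a} ∩ t ⁻¹' {t x})).Nonempty := by
        apply nonempty_of_measure_ne_zero
        intro hzero
        rw [hπdef] at hapos
        dsimp only at hapos
        rw [hzero] at hapos
        simp at hapos
      obtain ⟨w, hwU, hws, hwt⟩ := hne
      simp only [Set.mem_preimage, Set.mem_singleton_iff] at hws hwt
      refine ⟨w, hwU, hwt.symm, ?_⟩
      refine ⟨(hVne a haV).some, ?_, ?_⟩
      · rw [hS₀def]
        apply Finset.mem_image.2
        exact ⟨⟨a, haV⟩, Finset.mem_attach _ _, rfl⟩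
      · have hz : (hVne a haV).some ∈ U ∩ s ⁻¹' {a} := (hVne a haV).some_mem
        have : s ((hVne a haV).some) = a := hz.2
        rw [this, hws]
    have e1 : ∑ b ∈ B, (∑ a : S, π a b) = (μ (U ∩ t ⁻¹' (↑B : Set T))).toReal := by
      rw [fiber_split μ t ht U hU B]
      exact Finset.sum_congr rfl (fun b _ => (hπt b).symm)
    have e2 : (μ (U ∩ t ⁻¹' (↑B : Set T))).toReal
        ≤ (μ (U ∩ {x | ∃ w ∈ U, t x = t w ∧ ∃ z ∈ S₀, s w = s z})).toReal :=
      ENNReal.toReal_mono (measure_ne_top μ _) (measure_mono hcov)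
    rw [hmU]
    calc (∑ a : S, ∑ b : T, π a b) - η
        < ∑ b ∈ B, (∑ a : S, π a b) := hV3
      _ = _ := e1
      _ ≤ _ := e2
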